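/- Let ≤ be a rooted tree order on a finite vertex set V, and let G be its comparability graph (distinct u, w adjacent iff comparable). Let θ be a second-order stationary point of the Kuramoto energy E_G. Then any two distinct leaves with the same parent synchronize: if p and q are distinct minimal elements and the least strict ancestor of p equals the least strict ancestor of q, then v_p = v_q, where v_k = (cos θ_k, sin θ_k). -/

import Mathlib

open Finset

/-- The phasor of vertex `i` at state `θ`: the unit vector `(cos θᵢ, sin θᵢ) ∈ ℝ²`. -/
noncomputable def phasor {V : Type*} (θ : V → ℝ) (i : V) : ℝ × ℝ :=
  (Real.cos (θ i), Real.sin (θ i))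

/-- The Kuramoto energy `E_G(θ) = (1/2)·Σ_{i,j} A_{ij}(1 − cos(θ_i − θ_j))`. -/
noncomputable def kuramotoEnergy {V : Type*} [Fintype V] (G : SimpleGraph V)
    [DecidableRel G.Adj] (θ : V → ℝ) : ℝ :=
  (1 / 2) * ∑ i, ∑ j, (if G.Adj i j then (1 : ℝ) else 0) * (1 - Real.cos (θ i - θ j))

/-- The Hessian of the Kuramoto energy at `θ`: off-diagonal entries
`−A_{ij} cos(θ_i − θ_j)` and diagonal entries `Σ_{k ≠ i} A_{ik} cos(θ_i − θ_k)`. -/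
noncomputable def kuramotoHessian {V : Type*} [Fintype V] [DecidableEq V] (G : SimpleGraph V)
    [DecidableRel G.Adj] (θ : V → ℝ) : Matrix V V ℝ :=
  Matrix.of fun i j =>
    if i = j then ∑ k ∈ Finset.univ.erase i, (if G.Adj i k then Real.cos (θ i - θ k) else 0)
    else -(if G.Adj i j then Real.cos (θ i - θ j) else 0)

/-- `θ` is a second-order stationary point of the Kuramoto energy: the gradient
`(∇E_G(θ))_i = Σ_j A_{ij} sin(θ_i − θ_j)` vanishes and the Hessian is positive
semidefinite. -/
def IsSOSP {V : Type*} [Fintype V] [DecidableEq V] (G : SimpleGraph V)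
    [DecidableRel G.Adj] (θ : V → ℝ) : Prop :=
  (∀ i, ∑ j, (if G.Adj i j then (1 : ℝ) else 0) * Real.sin (θ i - θ j) = 0) ∧
  (kuramotoHessian G θ).PosSemidef

/-- The comparability graph of a partial order: distinct `u, w` are adjacent iff
`u < w` or `w < u`. -/
def comparabilityGraph (V : Type*) [PartialOrder V] : SimpleGraph V where
  Adj u w := u < w ∨ w < u
  symm := ⟨fun _ _ h => Or.symm h⟩
  loopless := ⟨fun u h => by rcases h with h | h <;> exact lt_irrefl u h⟩

instance {V : Type*} [PartialOrder V] [DecidableRel ((· < ·) : V → V → Prop)] :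
    DecidableRel (comparabilityGraph V).Adj :=
  fun u w => inferInstanceAs (Decidable (u < w ∨ w < u))

private lemma sin_sum_aux {V : Type*} (s : Finset V) (θ : V → ℝ) (a : ℝ) :
    ∑ u ∈ s, Real.sin (a - θ u)
      = Real.sin a * (∑ u ∈ s, Real.cos (θ u)) - Real.cos a * (∑ u ∈ s, Real.sin (θ u)) := by
  simp [Real.sin_sub, Finset.sum_sub_distrib, Finset.mul_sum]

private lemma cos_sum_aux {V : Type*} (s : Finset V) (θ : V → ℝ) (a : ℝ) :
    ∑ u ∈ s, Real.cos (a - θ u)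
      = Real.cos a * (∑ u ∈ s, Real.cos (θ u)) + Real.sin a * (∑ u ∈ s, Real.sin (θ u)) := by
  simp [Real.cos_sub, Finset.sum_add_distrib, Finset.mul_sum]

private lemma psd_diag_nonneg {V : Type*} [Fintype V] [DecidableEq V] {M : Matrix V V ℝ}
    (h : M.PosSemidef) (i : V) : 0 ≤ M i i := by
  have := h.dotProduct_mulVec_nonneg (Pi.single i 1)
  simpa [dotProduct, Matrix.mulVec, Pi.single_apply, Finset.sum_ite_eq',
    Finset.sum_ite_eq] using this

/-- On the comparability graph of a rooted tree order, at a second-order stationary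
point `θ` of the Kuramoto energy, any two distinct leaves (minimal elements) with the
same parent (the same least strict ancestor `r`) synchronize: `v_p = v_q`. -/
theorem stmt_12 {V : Type*} [Fintype V] [DecidableEq V] [PartialOrder V]
    [DecidableRel ((· < ·) : V → V → Prop)]
    (hroot : ∃ r : V, ∀ v : V, v ≤ r)
    (hchain : ∀ v : V, IsChain (· ≤ ·) {u : V | v < u})
    (θ : V → ℝ) (hθ : IsSOSP (comparabilityGraph V) θ)
    (p q : V) (hpq : p ≠ q) (hp : IsMin p) (hq : IsMin q)
    (r : V) (hrp : p < r) (hrq : q < r)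
    (hrp_least : ∀ u : V, p < u → r ≤ u) (hrq_least : ∀ u : V, q < u → r ≤ u) :
    phasor θ p = phasor θ q := by
  classical
  obtain ⟨hgrad, hpsd⟩ := hθ
  set H := kuramotoHessian (comparabilityGraph V) θ with hH
  have hadjp : ∀ j, (comparabilityGraph V).Adj p j ↔ r ≤ j := by
    intro j
    constructor
    · rintro (h | h)
      · exact hrp_least j h
      · exact absurd (hp h.le) h.not_ge
    · intro h; exact Or.inl (lt_of_lt_of_le hrp h)
  have hadjq : ∀ j, (comparabilityGraph V).Adj q j ↔ r ≤ j := by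
    intro j
    constructor
    · rintro (h | h)
      · exact hrq_least j h
      · exact absurd (hq h.le) h.not_ge
    · intro h; exact Or.inl (lt_of_lt_of_le hrq h)
  set N : Finset V := univ.filter (fun u => r ≤ u) with hNdef
  set Zc : ℝ := ∑ u ∈ N, Real.cos (θ u) with hZcdef
  set Zs : ℝ := ∑ u ∈ N, Real.sin (θ u) with hZsdef
  have diag_nonneg : ∀ i, 0 ≤ H i i := fun i => psd_diag_nonneg hpsd i
  -- gradient fact for p and q
  have grad_fact : ∀ v : V, (∀ j, (comparabilityGraph V).Adj v j ↔ r ≤ j) →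
      Real.sin (θ v) * Zc - Real.cos (θ v) * Zs = 0 := by
    intro v hv
    have h1 : ∑ u ∈ N, Real.sin (θ v - θ u) = 0 := by
      rw [hNdef, Finset.sum_filter]
      refine (Finset.sum_congr rfl fun j _ => ?_).trans (hgrad v)
      by_cases hj : r ≤ j
      · simp [hj, (hv j).mpr hj]
      · have hnadj : ¬ (comparabilityGraph V).Adj v j := fun hh => hj ((hv j).mp hh)
        simp [hj, hnadj]
    rw [sin_sum_aux] at h1
    exact h1
  have hgp := grad_fact p hadjp
  have hgq := grad_fact q hadjq
  -- diagonal fact for p and q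
  have diag_fact : ∀ v : V, (∀ j, (comparabilityGraph V).Adj v j ↔ r ≤ j) →
      H v v = Real.cos (θ v) * Zc + Real.sin (θ v) * Zs := by
    intro v hv
    have h0 : H v v
        = ∑ k ∈ Finset.univ.erase v,
            (if (comparabilityGraph V).Adj v k then Real.cos (θ v - θ k) else 0) := by
      simp [hH, kuramotoHessian]
    have h1 : H v v = ∑ u ∈ N, Real.cos (θ v - θ u) := by
      rw [h0, Finset.sum_erase _ (by simp [(comparabilityGraph V).irrefl])]
      rw [hNdef, Finset.sum_filter]
      refine Finset.sum_congr rfl fun j _ => ?_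
      by_cases hj : r ≤ j
      · simp [hj, (hv j).mpr hj]
      · have hnadj : ¬ (comparabilityGraph V).Adj v j := fun hh => hj ((hv j).mp hh)
        simp [hj, hnadj]
    rw [h1, cos_sum_aux]
  have pyp : Real.sin (θ p) ^ 2 + Real.cos (θ p) ^ 2 = 1 := Real.sin_sq_add_cos_sq _
  have pyq : Real.sin (θ q) ^ 2 + Real.cos (θ q) ^ 2 = 1 := Real.sin_sq_add_cos_sq _
  set dp : ℝ := Real.cos (θ p) * Zc + Real.sin (θ p) * Zs with hdpdef
  set dq : ℝ := Real.cos (θ q) * Zc + Real.sin (θ q) * Zs with hdqdef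
  have hdp0 : 0 ≤ dp := by
    have h := diag_nonneg p
    rwa [diag_fact p hadjp, ← hdpdef] at h
  have hdq0 : 0 ≤ dq := by
    have h := diag_nonneg q
    rwa [diag_fact q hadjq, ← hdqdef] at h
  have hZc_p : Zc = dp * Real.cos (θ p) := by
    rw [hdpdef]; linear_combination Real.sin (θ p) * hgp - Zc * pyp
  have hZs_p : Zs = dp * Real.sin (θ p) := by
    rw [hdpdef]; linear_combination (-Real.cos (θ p)) * hgp - Zs * pyp
  have hZc_q : Zc = dq * Real.cos (θ q) := by
    rw [hdqdef]; linear_combination Real.sin (θ q) * hgq - Zc * pyq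
  have hZs_q : Zs = dq * Real.sin (θ q) := by
    rw [hdqdef]; linear_combination (-Real.cos (θ q)) * hgq - Zs * pyq
  by_cases hdp : dp = 0
  · -- degenerate case: Z = 0, derive a contradiction
    exfalso
    have hZc0 : Zc = 0 := by rw [hZc_p, hdp, zero_mul]
    have hZs0 : Zs = 0 := by rw [hZs_p, hdp, zero_mul]
    set T : Finset V := univ.filter (fun v => v ≤ r) with hTdef
    set N' : Finset V := univ.filter (fun u => r < u) with hN'def
    have hrT : r ∈ T := by simp [hTdef]
    have hrN' : r ∉ N' := by simp [hN'def]
    have hNsplit : N = insert r N' := by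
      ext u
      simp only [hNdef, hN'def, Finset.mem_filter, Finset.mem_univ, true_and,
        Finset.mem_insert]
      constructor
      · intro h
        rcases lt_or_eq_of_le h with h' | h'
        · exact Or.inr (by simpa using h')
        · exact Or.inl h'.symm
      · rintro (rfl | h)
        · exact le_refl u
        · exact (by simpa using h : r < u).le
    have hZc' : ∑ u ∈ N', Real.cos (θ u) = -Real.cos (θ r) := by
      have : Zc = Real.cos (θ r) + ∑ u ∈ N', Real.cos (θ u) := by
        rw [hZcdef, hNsplit, Finset.sum_insert hrN']
      rw [hZc0] at this; linarith
    have hZs' : ∑ u ∈ N', Real.sin (θ u) = -Real.sin (θ r) := by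
      have : Zs = Real.sin (θ r) + ∑ u ∈ N', Real.sin (θ u) := by
        rw [hZsdef, hNsplit, Finset.sum_insert hrN']
      rw [hZs0] at this; linarith
    -- cross adjacency characterization
    have cross : ∀ i, i ≤ r → ∀ k, ¬ k ≤ r →
        ((comparabilityGraph V).Adj i k ↔ r < k) := by
      intro i hi k hk
      constructor
      · rintro (h | h)
        · rcases eq_or_lt_of_le hi with rfl | hir
          · exact h
          · have hkr : k ≠ r := fun e => hk (e ▸ le_refl r)
            rcases hchain i (show k ∈ {u : V | i < u} from h)
              (show r ∈ {u : V | i < u} from hir) hkr with hh | hh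
            · exact absurd hh hk
            · exact lt_of_le_of_ne hh (Ne.symm hkr)
        · exact absurd (h.le.trans hi) hk
      · intro h; exact Or.inl (lt_of_le_of_lt hi h)
    -- inner sum identity
    have inner : ∀ i ∈ T, ∑ j ∈ T, H i j = -Real.cos (θ i - θ r) := by
      intro i hiT
      have hir : i ≤ r := by simpa [hTdef] using hiT
      have hdiag : H i i
          = ∑ k ∈ Finset.univ.erase i,
              (if (comparabilityGraph V).Adj i k then Real.cos (θ i - θ k) else 0) := by
        simp [hH, kuramotoHessian]
      have hoff : ∑ j ∈ T.erase i, H i j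
          = -∑ j ∈ T.erase i,
              (if (comparabilityGraph V).Adj i j then Real.cos (θ i - θ j) else 0) := by
        rw [← Finset.sum_neg_distrib]
        refine Finset.sum_congr rfl fun j hj => ?_
        have hji : j ≠ i := (Finset.mem_erase.mp hj).1
        simp [hH, kuramotoHessian, (Ne.symm hji : ¬ i = j)]
      have hsub : T.erase i ⊆ Finset.univ.erase i :=
        Finset.erase_subset_erase i (Finset.subset_univ T)
      have hsd : (Finset.univ.erase i) \ (T.erase i) = Finset.univ \ T := by
        ext k
        by_cases hk : k = i
        · subst hk
          simp [hir, hTdef]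
        · simp [Finset.mem_sdiff, Finset.mem_erase, hk, hTdef]
      have step : ∑ j ∈ T, H i j
          = ∑ k ∈ Finset.univ \ T,
              (if (comparabilityGraph V).Adj i k then Real.cos (θ i - θ k) else 0) := by
        rw [← Finset.add_sum_erase T _ hiT, hdiag, hoff, ← hsd,
          Finset.sum_sdiff_eq_sub hsub]
        ring
      have step2 : ∑ k ∈ Finset.univ \ T,
              (if (comparabilityGraph V).Adj i k then Real.cos (θ i - θ k) else 0)
          = ∑ k ∈ Finset.univ \ T, (if r < k then Real.cos (θ i - θ k) else 0) := by
        refine Finset.sum_congr rfl fun k hk => ?_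
        have hkT : ¬ k ≤ r := by
          have := (Finset.mem_sdiff.mp hk).2
          simpa [hTdef] using this
        exact if_congr (cross i hir k hkT) rfl rfl
      have step3 : ∑ k ∈ Finset.univ \ T, (if r < k then Real.cos (θ i - θ k) else 0)
          = ∑ k ∈ N', Real.cos (θ i - θ k) := by
        rw [Finset.sum_sdiff_eq_sub (Finset.subset_univ T)]
        have hT0 : ∑ k ∈ T, (if r < k then Real.cos (θ i - θ k) else 0) = 0 := by
          refine Finset.sum_eq_zero fun k hk => ?_
          have : k ≤ r := by simpa [hTdef] using hk
          rw [if_neg (fun h => absurd (h.trans_le this) (lt_irrefl r))]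
        rw [hT0, sub_zero, hN'def, Finset.sum_filter]
      rw [step, step2, step3, cos_sum_aux, hZc', hZs', Real.cos_sub]
      ring
    -- diagonal at r
    have Hrr : H r r = (∑ i ∈ T, Real.cos (θ r - θ i)) - 2 := by
      have h0 : H r r
          = ∑ k ∈ Finset.univ.erase r,
              (if (comparabilityGraph V).Adj r k then Real.cos (θ r - θ k) else 0) := by
        simp [hH, kuramotoHessian]
      have hsplit : ∀ k ∈ Finset.univ.erase r,
          (if (comparabilityGraph V).Adj r k then Real.cos (θ r - θ k) else 0)
            = (if r < k then Real.cos (θ r - θ k) else 0)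
              + (if k < r then Real.cos (θ r - θ k) else 0) := by
        intro k _
        by_cases h1 : r < k
        · have ha : (comparabilityGraph V).Adj r k := Or.inl h1
          rw [if_pos ha, if_pos h1, if_neg (lt_asymm h1), add_zero]
        · by_cases h2 : k < r
          · have ha : (comparabilityGraph V).Adj r k := Or.inr h2
            rw [if_pos ha, if_neg h1, if_pos h2, zero_add]
          · have ha : ¬ (comparabilityGraph V).Adj r k := by
              rintro (h | h) <;> contradiction
            rw [if_neg ha, if_neg h1, if_neg h2, add_zero]
      have hA : ∑ k ∈ Finset.univ.erase r, (if r < k then Real.cos (θ r - θ k) else 0)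
          = -1 := by
        rw [Finset.sum_erase _ (by simp)]
        have : ∑ k, (if r < k then Real.cos (θ r - θ k) else 0)
            = ∑ k ∈ N', Real.cos (θ r - θ k) := by
          rw [hN'def, Finset.sum_filter]
        rw [this, cos_sum_aux, hZc', hZs']
        linear_combination -(Real.sin_sq_add_cos_sq (θ r))
      have hBset : (Finset.univ.erase r).filter (fun k => k < r) = T.erase r := by
        ext k
        simp only [Finset.mem_filter, Finset.mem_erase, Finset.mem_univ, true_and,
          and_true, hTdef]
        constructor
        · rintro ⟨h1, h2⟩; exact ⟨h1, h2.le⟩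
        · rintro ⟨h1, h2⟩; exact ⟨h1, lt_of_le_of_ne h2 h1⟩
      have hB : ∑ k ∈ Finset.univ.erase r, (if k < r then Real.cos (θ r - θ k) else 0)
          = (∑ i ∈ T, Real.cos (θ r - θ i)) - 1 := by
        rw [← Finset.sum_filter, hBset, Finset.sum_erase_eq_sub hrT]
        simp
      rw [h0, Finset.sum_congr rfl hsplit, Finset.sum_add_distrib, hA, hB]
      ring
    have hK : 2 ≤ ∑ i ∈ T, Real.cos (θ r - θ i) := by
      have := diag_nonneg r
      rw [Hrr] at this
      linarith
    -- quadratic form on the indicator of T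
    set x0 : V → ℝ := fun v => if v ≤ r then (1 : ℝ) else 0 with hx0
    have hform := hpsd.dotProduct_mulVec_nonneg x0
    have hform' : (0 : ℝ) ≤ ∑ i ∈ T, ∑ j ∈ T, H i j := by
      have hE : dotProduct (star x0) (H.mulVec x0)
          = ∑ i ∈ T, ∑ j ∈ T, H i j := by
        simp only [dotProduct, Matrix.mulVec, Pi.star_apply, star_trivial,
          hx0, hTdef, Finset.sum_filter]
        refine Finset.sum_congr rfl fun i _ => ?_
        by_cases hi : i ≤ r
        · simp only [hi, if_true, one_mul]
          refine Finset.sum_congr rfl fun j _ => ?_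
          by_cases hj : j ≤ r <;> simp [hj]
        · simp [hi]
      rw [hE] at hform
      exact hform
    have hneg : ∑ i ∈ T, ∑ j ∈ T, H i j = -∑ i ∈ T, Real.cos (θ r - θ i) := by
      rw [← Finset.sum_neg_distrib]
      refine Finset.sum_congr rfl fun i hi => ?_
      rw [inner i hi, ← Real.cos_neg, neg_sub]
    rw [hneg] at hform'
    linarith
  · -- nondegenerate case
    have hdppos : 0 < dp := lt_of_le_of_ne hdp0 (Ne.symm hdp)
    have h1 : Zc ^ 2 + Zs ^ 2 = dp ^ 2 := by
      rw [hZc_p, hZs_p]; linear_combination dp ^ 2 * pyp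
    have h2 : Zc ^ 2 + Zs ^ 2 = dq ^ 2 := by
      rw [hZc_q, hZs_q]; linear_combination dq ^ 2 * pyq
    have hsq : dp ^ 2 = dq ^ 2 := by linarith
    have hdqpos : 0 < dq := by nlinarith
    have hdpq : dp = dq := by nlinarith
    have hc : Real.cos (θ p) = Real.cos (θ q) := by
      have h := hZc_p.symm.trans hZc_q
      rw [hdpq] at h
      exact mul_left_cancel₀ (ne_of_gt hdqpos) h
    have hs : Real.sin (θ p) = Real.sin (θ q) := by
      have h := hZs_p.symm.trans hZs_q
      rw [hdpq] at h
      exact mul_left_cancel₀ (ne_of_gt hdqpos) h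
    unfold phasor
    rw [hc, hs]
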